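/- In the clique-interdiction flow construction: for every x ∈ X* there is a path P' ∈ 𝒫 with x_{P'} = 1 that contains both a_s and a_t. -/

import Mathlib

open scoped BigOperators

/-- A directed multigraph: arcs `A` with tail and head maps into a vertex type `V`. -/
structure MultiDigraph (V : Type) (A : Type) where
  tail : A → V
  head : A → V

namespace MultiDigraph

variable {V A : Type}

/-- `p` is (the arc list of) a simple directed `s`-`t`-path in `D`. -/
def IsPath (D : MultiDigraph V A) (s t : V) (p : List A) : Prop :=
  p ≠ [] ∧ List.Chain' (fun a b => D.head a = D.tail b) p ∧
    (p.map D.tail).head? = some s ∧ (p.map D.head).getLast? = some t ∧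
    (p.map D.tail ++ [t]).Nodup

/-- The set of simple `s`-`t`-paths of `D`. -/
def pathSet (D : MultiDigraph V A) (s t : V) : Set (List A) := {p | D.IsPath s t p}

/-- `x` is a feasible `s`-`t` path flow with respect to capacities `u`. -/
def IsFlow (D : MultiDigraph V A) (s t : V) (u : A → ℚ) (x : List A → ℚ) : Prop :=
  (∀ p, 0 ≤ x p) ∧ (∀ p, x p ≠ 0 → D.IsPath s t p) ∧
    ∀ a : A, (∑ᶠ p ∈ {p : List A | D.IsPath s t p ∧ a ∈ p}, x p) ≤ u a

/-- The value of a path flow. -/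
noncomputable def value (D : MultiDigraph V A) (s t : V) (x : List A → ℚ) : ℚ :=
  ∑ᶠ p ∈ D.pathSet s t, x p

/-- `λ(x,S)`: the amount of flow on paths meeting `S`. -/
noncomputable def loss (D : MultiDigraph V A) (s t : V) (x : List A → ℚ) (S : Set A) : ℚ :=
  ∑ᶠ p ∈ {p : List A | D.IsPath s t p ∧ ∃ a ∈ S, a ∈ p}, x p

/-- The amount of flow surviving the failure of `S`. -/
noncomputable def survival (D : MultiDigraph V A) (s t : V) (x : List A → ℚ) (S : Set A) : ℚ :=
  ∑ᶠ p ∈ {p : List A | D.IsPath s t p ∧ ∀ a ∈ S, a ∉ p}, x p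

/-- A feasible multicommodity path flow meeting all demands exactly. -/
def IsMultiFlow {K : Type} (D : MultiDigraph V A) (u : A → ℚ)
    (src snk : K → V) (dem : K → ℚ) (x : K → List A → ℚ) : Prop :=
  (∀ i p, 0 ≤ x i p) ∧ (∀ i p, x i p ≠ 0 → D.IsPath (src i) (snk i) p) ∧
    (∀ a : A,
      (∑ᶠ i : K, ∑ᶠ p ∈ {p : List A | D.IsPath (src i) (snk i) p ∧ a ∈ p}, x i p) ≤ u a) ∧
    (∀ i : K, (∑ᶠ p ∈ D.pathSet (src i) (snk i), x i p) = dem i)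

/-- `λ(x,S)` for a multicommodity flow. -/
noncomputable def multiLoss {K : Type} (D : MultiDigraph V A)
    (src snk : K → V) (x : K → List A → ℚ) (S : Set A) : ℚ :=
  ∑ᶠ i : K, ∑ᶠ p ∈ {p : List A | D.IsPath (src i) (snk i) p ∧ ∃ a ∈ S, a ∈ p}, x i p

end MultiDigraph

/-- `S` is a legal failure scenario for compatibility graph `H` and budget `k`:
a clique of `H` of cardinality at most `k`. -/
def cliqueScenario {A : Type} (H : SimpleGraph A) (k : ℕ) (S : Set A) : Prop :=
  S.Finite ∧ S.ncard ≤ k ∧ H.IsClique S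

section CliqueInterdiction

/-- Nodes of the clique-interdiction flow construction. -/
inductive CNode (n : ℕ) : Type
  | s | s0 | s1 | t0 | t1 | t
  | v (i : Fin (n + 1))
  | y (i : Fin n) (b : Bool)
  | z (i : Fin n) (b : Bool)

/-- Arcs of the clique-interdiction flow construction (all of capacity 1);
`b = false` stands for superscript `0` and `b = true` for superscript `1`;
the bundle `A_{st}` has `k − 2 = ℓ − 1` arcs. -/
inductive CArc (n r ℓ : ℕ) : Type
  | as                          -- a_s = (s, v_1)
  | at'                         -- a_t = (v_{n+1}, t)
  | vy (i : Fin n) (b : Bool)   -- (v_i, y_i^b)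
  | yz (i : Fin n) (b : Bool)   -- a^b_{v_i} = (y_i^b, z_i^b)
  | zv (i : Fin n) (b : Bool)   -- (z_i^b, v_{i+1})
  | as0 (j : Fin r)             -- bundle A_s⁰: (s, s⁰)
  | at0 (j : Fin r)             -- bundle A_t⁰: (t⁰, t)
  | s0y (i : Fin n)             -- (s⁰, y_i⁰)
  | zt0 (i : Fin n)             -- (z_i⁰, t⁰)
  | as1 (j : Fin (n - r))       -- bundle A_s¹: (s, s¹)
  | at1 (j : Fin (n - r))       -- bundle A_t¹: (t¹, t)
  | s1y (i : Fin n)             -- (s¹, y_i¹)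
  | zt1 (i : Fin n)             -- (z_i¹, t¹)
  | ast (j : Fin (ℓ - 1))       -- bundle A_{st}: (s, t)

variable (n r ℓ : ℕ)

/-- The digraph of the clique-interdiction flow construction. -/
def cD : MultiDigraph (CNode n) (CArc n r ℓ) where
  tail a :=
    match a with
    | .as => .s
    | .at' => .v (Fin.last n)
    | .vy i _ => .v i.castSucc
    | .yz i b => .y i b
    | .zv i b => .z i b
    | .as0 _ => .s
    | .at0 _ => .t0
    | .s0y _ => .s0
    | .zt0 i => .z i false
    | .as1 _ => .s
    | .at1 _ => .t1
    | .s1y _ => .s1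
    | .zt1 i => .z i true
    | .ast _ => .s
  head a :=
    match a with
    | .as => .v 0
    | .at' => .t
    | .vy i b => .y i b
    | .yz i b => .z i b
    | .zv i _ => .v i.succ
    | .as0 _ => .s0
    | .at0 _ => .t
    | .s0y i => .y i false
    | .zt0 _ => .t0
    | .as1 _ => .s1
    | .at1 _ => .t
    | .s1y i => .y i true
    | .zt1 _ => .t1
    | .ast _ => .t

/-- The set `S̄ := A_{st} ∪ {a_s, a_t}`. -/
def inSbar : CArc n r ℓ → Prop
  | .as => True
  | .at' => True
  | .ast _ => True
  | _ => False

/-- The compatibility graph of the clique-interdiction flow construction: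
`{a_v¹, a_w¹}` for every edge `{v,w}` of `G`, `{a_s, a_v¹}` for every vertex `v`,
and all 2-element subsets of `S̄`. -/
def cH (G : SimpleGraph (Fin n)) : SimpleGraph (CArc n r ℓ) :=
  SimpleGraph.fromRel (fun x y =>
    (∃ i j : Fin n, G.Adj i j ∧ x = CArc.yz i true ∧ y = CArc.yz j true) ∨
    (∃ i : Fin n, x = CArc.as ∧ y = CArc.yz i true) ∨
    (inSbar n r ℓ x ∧ inSbar n r ℓ y))

/-- Membership in `X*`: an integral `s`-`t` path flow of value `θ = n + ℓ` (unit
capacities) with `λ(x,S) ≤ k − 1 = ℓ` for every clique scenario `S ∈ S_{H,k}`,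
`k = ℓ + 1`. -/
def memXstar (G : SimpleGraph (Fin n)) (x : List (CArc n r ℓ) → ℚ) : Prop :=
  (cD n r ℓ).IsFlow CNode.s CNode.t (fun _ => 1) x ∧
  (∀ p, ∃ zp : ℤ, x p = (zp : ℚ)) ∧
  (cD n r ℓ).value CNode.s CNode.t x = (n : ℚ) + (ℓ : ℚ) ∧
  (∀ S : Set (CArc n r ℓ), cliqueScenario (cH n r ℓ G) (ℓ + 1) S →
    (cD n r ℓ).loss CNode.s CNode.t x S ≤ (ℓ : ℚ))

end CliqueInterdiction

section AuxPath

variable {V A : Type}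

namespace MultiDigraph

lemma IsPath.tails_nodup {D : MultiDigraph V A} {s t : V} {p : List A}
    (hp : D.IsPath s t p) : (p.map D.tail).Nodup :=
  (List.nodup_append.mp hp.2.2.2.2).1

lemma IsPath.t_not_mem_tails {D : MultiDigraph V A} {s t : V} {p : List A}
    (hp : D.IsPath s t p) : t ∉ p.map D.tail := fun ht =>
  (List.nodup_append.mp hp.2.2.2.2).2.2 t ht t (List.mem_singleton_self t) rfl

lemma IsPath.nodup {D : MultiDigraph V A} {s t : V} {p : List A}
    (hp : D.IsPath s t p) : p.Nodup :=
  List.Nodup.of_map _ hp.tails_nodup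

lemma IsPath.head?_eq {D : MultiDigraph V A} {s t : V} {p : List A}
    (hp : D.IsPath s t p) {a : A} (ha : a ∈ p) (hta : D.tail a = s) :
    p.head? = some a := by
  obtain ⟨hne, -, hhd, -, hnd⟩ := hp
  cases p with
  | nil => exact absurd rfl hne
  | cons b l =>
    have hb : D.tail b = s := by simpa using hhd
    rcases List.mem_cons.mp ha with rfl | h
    · rfl
    · exfalso
      have h1 : D.tail b ∉ (l.map D.tail ++ [t]) := by
        have h2 : ((D.tail b :: l.map D.tail) ++ [t]).Nodup := hnd
        rw [List.cons_append] at h2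
        exact (List.nodup_cons.mp h2).1
      have hmem : D.tail a ∈ l.map D.tail := List.mem_map_of_mem h
      rw [hta, ← hb] at hmem
      exact h1 (List.mem_append_left _ hmem)

lemma last_aux {D : MultiDigraph V A} {t : V} {a : A} :
    ∀ {p : List A}, List.Chain' (fun a b => D.head a = D.tail b) p →
      t ∉ p.map D.tail → a ∈ p → D.head a = t → p.getLast? = some a
  | [], _, _, ha, _ => absurd ha List.not_mem_nil
  | [b], _, _, ha, _ => by
      rcases List.mem_cons.mp ha with rfl | h
      · rfl
      · cases h
  | b :: c :: l', hch, hnt, ha, hta => by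
      obtain ⟨h1, h2⟩ := List.isChain_cons_cons.mp hch
      rcases List.mem_cons.mp ha with rfl | h
      · exfalso
        apply hnt
        have hct : D.tail c = t := by rw [← h1, hta]
        rw [← hct]
        exact List.mem_map_of_mem (List.mem_cons_of_mem _ List.mem_cons_self)
      · rw [List.getLast?_cons_cons]
        exact last_aux h2
          (fun hm => hnt (by
            simp only [List.map_cons] at hm ⊢
            exact List.mem_cons_of_mem _ hm)) h hta

lemma IsPath.getLast?_eq {D : MultiDigraph V A} {s t : V} {p : List A}
    (hp : D.IsPath s t p) {a : A} (ha : a ∈ p) (hha : D.head a = t) :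
    p.getLast? = some a :=
  last_aux hp.2.1 hp.t_not_mem_tails ha hha

lemma IsPath.eq_singleton {D : MultiDigraph V A} {s t : V} {p : List A}
    (hp : D.IsPath s t p) {a : A} (ha : a ∈ p)
    (hta : D.tail a = s) (hha : D.head a = t) : p = [a] := by
  have h1 := hp.head?_eq ha hta
  have h2 := hp.getLast?_eq ha hha
  have hnd := hp.nodup
  cases p with
  | nil => cases ha
  | cons b l =>
    cases l with
    | nil =>
      have hb : b = a := by simpa using h1
      rw [hb]
    | cons c l' =>
      exfalso
      have hb : b = a := by simpa using h1
      subst hb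
      rw [List.getLast?_cons_cons] at h2
      have hmem : b ∈ c :: l' := List.mem_of_mem_getLast? (Option.mem_def.mpr h2)
      exact (List.nodup_cons.mp hnd).1 hmem

end MultiDigraph

lemma pathSet_finite {V A : Type} [Fintype A] (D : MultiDigraph V A) (s t : V) :
    (D.pathSet s t).Finite := by
  apply (List.finite_length_le A (Fintype.card A)).subset
  intro p hp
  exact (MultiDigraph.IsPath.nodup hp).length_le_card

end AuxPath

section MainAux

deriving instance DecidableEq, Fintype for CArc

lemma carc_tail_s {n r ℓ : ℕ} (a : CArc n r ℓ) (h : (cD n r ℓ).tail a = CNode.s) :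
    a = CArc.as ∨ (∃ j, a = CArc.as0 j) ∨ (∃ j, a = CArc.as1 j) ∨ (∃ j, a = CArc.ast j) := by
  cases a <;> simp_all [cD]

lemma carc_head_t {n r ℓ : ℕ} (a : CArc n r ℓ) (h : (cD n r ℓ).head a = CNode.t) :
    a = CArc.at' ∨ (∃ j, a = CArc.at0 j) ∨ (∃ j, a = CArc.at1 j) ∨ (∃ j, a = CArc.ast j) := by
  cases a <;> simp_all [cD]

end MainAux
/-- In the clique-interdiction flow construction: every `x ∈ X*`
has a flow-carrying path `P'` (with `x_{P'} = 1`) containing both `a_s` and `a_t`. -/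
theorem cliqueInterdiction_path_through_as_at
    (n r ℓ : ℕ) (hℓ : 1 ≤ ℓ) (hr : r ≤ n) (G : SimpleGraph (Fin n))
    (x : List (CArc n r ℓ) → ℚ) (hx : memXstar n r ℓ G x) :
    ∃ P' : List (CArc n r ℓ), (cD n r ℓ).IsPath CNode.s CNode.t P' ∧
      x P' = 1 ∧ CArc.as ∈ P' ∧ CArc.at' ∈ P' := by
  classical
  obtain ⟨⟨hx0, hxp, hxcap⟩, hxint, hxval, hxloss⟩ := hx
  have hPfin : ((cD n r ℓ).pathSet CNode.s CNode.t).Finite := pathSet_finite _ _ _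
  set PF : Finset (List (CArc n r ℓ)) := hPfin.toFinset with hPFdef
  have hmemPF : ∀ p, p ∈ PF ↔ (cD n r ℓ).IsPath CNode.s CNode.t p := by
    intro p; rw [hPFdef, Set.Finite.mem_toFinset]; rfl
  -- flow on an arc as a finset sum
  have hcap : ∀ a : CArc n r ℓ, ∑ p ∈ PF.filter (fun p => a ∈ p), x p ≤ 1 := by
    intro a
    have h := hxcap a
    have hseteq : {p : List (CArc n r ℓ) | (cD n r ℓ).IsPath CNode.s CNode.t p ∧ a ∈ p}
        = ↑(PF.filter (fun p => a ∈ p)) := by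
      ext p; simp [hmemPF]
    rwa [hseteq, finsum_mem_coe_finset] at h
  have hval : ∑ p ∈ PF, x p = (n : ℚ) + ℓ := by
    have hseteq : (cD n r ℓ).pathSet CNode.s CNode.t = ↑PF := by
      rw [hPFdef, Set.Finite.coe_toFinset]
    rw [MultiDigraph.value, hseteq, finsum_mem_coe_finset] at hxval
    exact hxval
  -- first and last arcs of paths
  have hfirst : ∀ p ∈ PF, ∃ b, p.head? = some b ∧ (cD n r ℓ).tail b = CNode.s ∧ b ∈ p := by
    intro p hp
    rw [hmemPF] at hp
    obtain ⟨hne, -, hhd, -, -⟩ := hp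
    cases p with
    | nil => exact absurd rfl hne
    | cons b l => exact ⟨b, rfl, by simpa using hhd, List.mem_cons_self⟩
  have hlastarc : ∀ p ∈ PF, ∃ b, p.getLast? = some b ∧ (cD n r ℓ).head b = CNode.t ∧ b ∈ p := by
    intro p hp
    rw [hmemPF] at hp
    obtain ⟨hne, -, -, hlast, -⟩ := hp
    obtain ⟨b, hb⟩ := Option.isSome_iff_exists.mp (List.getLast?_isSome.mpr hne)
    refine ⟨b, hb, ?_, List.mem_of_mem_getLast? (Option.mem_def.mpr hb)⟩
    rw [List.getLast?_map, hb] at hlast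
    simpa using hlast
  -- injectivity of bundle constructors
  have hinj0 : Function.Injective (CArc.as0 : Fin r → CArc n r ℓ) := fun a b h => by
    injection h
  have hinj1 : Function.Injective (CArc.as1 : Fin (n - r) → CArc n r ℓ) := fun a b h => by
    injection h
  have hinjt0 : Function.Injective (CArc.at0 : Fin r → CArc n r ℓ) := fun a b h => by
    injection h
  have hinjt1 : Function.Injective (CArc.at1 : Fin (n - r) → CArc n r ℓ) := fun a b h => by
    injection h
  have hinjst : Function.Injective (CArc.ast : Fin (ℓ - 1) → CArc n r ℓ) := fun a b h => by
    injection h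
  ---- source side: all arcs out of s are saturated
  set outS : Finset (CArc n r ℓ) :=
    {CArc.as} ∪ Finset.univ.image CArc.as0 ∪ Finset.univ.image CArc.as1
      ∪ Finset.univ.image CArc.ast with houtSdef
  have houtS_tail : ∀ a ∈ outS, (cD n r ℓ).tail a = CNode.s := by
    intro a ha
    rw [houtSdef] at ha
    simp only [Finset.mem_union, Finset.mem_singleton, Finset.mem_image, Finset.mem_univ,
      true_and] at ha
    rcases ha with ((rfl | ⟨j, rfl⟩) | ⟨j, rfl⟩) | ⟨j, rfl⟩ <;> rfl
  have hmaps : ∀ p ∈ PF, (fun p : List (CArc n r ℓ) => p.head?.getD CArc.as) p ∈ outS := by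
    intro p hp
    obtain ⟨b, hb, hbs, -⟩ := hfirst p hp
    simp only [hb, Option.getD_some]
    rcases carc_tail_s b hbs with rfl | ⟨j, rfl⟩ | ⟨j, rfl⟩ | ⟨j, rfl⟩ <;>
      simp [houtSdef]
  have hfeq : ∀ a ∈ outS,
      PF.filter (fun p => p.head?.getD CArc.as = a) = PF.filter (fun p => a ∈ p) := by
    intro a ha
    have hta := houtS_tail a ha
    ext p
    simp only [Finset.mem_filter, and_congr_right_iff]
    intro hp
    obtain ⟨b, hb, hbs, hbmem⟩ := hfirst p hp
    constructor
    · intro hgp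
      have hab : a = b := by rw [← hgp, hb]; rfl
      rw [hab]; exact hbmem
    · intro hap
      have h2 := ((hmemPF p).mp hp).head?_eq hap hta
      rw [h2]; rfl
  have hfib : ∑ a ∈ outS, ∑ p ∈ PF.filter (fun p => a ∈ p), x p = ∑ p ∈ PF, x p := by
    rw [← Finset.sum_fiberwise_of_maps_to hmaps x]
    exact Finset.sum_congr rfl fun a ha => by rw [hfeq a ha]
  have hcardS : outS.card = n + ℓ := by
    have hd1 : Disjoint ({CArc.as} : Finset (CArc n r ℓ)) (Finset.univ.image CArc.as0) := by
      simp [Finset.disjoint_left]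
    have hd2 : Disjoint (({CArc.as} : Finset (CArc n r ℓ)) ∪ Finset.univ.image CArc.as0)
        (Finset.univ.image CArc.as1) := by
      rw [Finset.disjoint_left]
      rintro a ha hb
      simp only [Finset.mem_union, Finset.mem_singleton, Finset.mem_image, Finset.mem_univ,
        true_and] at ha hb
      obtain ⟨i, rfl⟩ := hb
      rcases ha with h | ⟨i', h⟩ <;> simp at h
    have hd3 : Disjoint (({CArc.as} : Finset (CArc n r ℓ)) ∪ Finset.univ.image CArc.as0
        ∪ Finset.univ.image CArc.as1) (Finset.univ.image CArc.ast) := by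
      rw [Finset.disjoint_left]
      rintro a ha hb
      simp only [Finset.mem_union, Finset.mem_singleton, Finset.mem_image, Finset.mem_univ,
        true_and] at ha hb
      obtain ⟨i, rfl⟩ := hb
      rcases ha with (h | ⟨i', h⟩) | ⟨i', h⟩ <;> simp at h
    rw [houtSdef, Finset.card_union_of_disjoint hd3, Finset.card_union_of_disjoint hd2,
      Finset.card_union_of_disjoint hd1, Finset.card_singleton,
      Finset.card_image_of_injective _ hinj0, Finset.card_image_of_injective _ hinj1,
      Finset.card_image_of_injective _ hinjst, Finset.card_univ, Finset.card_univ,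
      Finset.card_univ, Fintype.card_fin, Fintype.card_fin, Fintype.card_fin]
    omega
  have hforce : ∀ a ∈ outS, ∑ p ∈ PF.filter (fun p => a ∈ p), x p = 1 := by
    intro a ha
    by_contra hne
    have hlt : ∑ p ∈ PF.filter (fun p => a ∈ p), x p < 1 :=
      lt_of_le_of_ne (hcap a) hne
    have hsum : ∑ b ∈ outS, ∑ p ∈ PF.filter (fun p => b ∈ p), x p
        < ∑ _b ∈ outS, (1 : ℚ) :=
      Finset.sum_lt_sum (fun i _ => hcap i) ⟨a, ha, hlt⟩
    rw [Finset.sum_const, nsmul_eq_mul, mul_one, hcardS, hfib, hval] at hsum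
    push_cast at hsum
    exact lt_irrefl _ hsum
  have hflow_as : ∑ p ∈ PF.filter (fun p => CArc.as ∈ p), x p = 1 :=
    hforce _ (by simp [houtSdef])
  have hflow_ast : ∀ j : Fin (ℓ - 1), ∑ p ∈ PF.filter (fun p => CArc.ast j ∈ p), x p = 1 :=
    fun j => hforce _ (by simp [houtSdef])
  ---- sink side: all arcs into t are saturated
  set inT : Finset (CArc n r ℓ) :=
    {CArc.at'} ∪ Finset.univ.image CArc.at0 ∪ Finset.univ.image CArc.at1
      ∪ Finset.univ.image CArc.ast with hinTdef
  have hinT_head : ∀ a ∈ inT, (cD n r ℓ).head a = CNode.t := by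
    intro a ha
    rw [hinTdef] at ha
    simp only [Finset.mem_union, Finset.mem_singleton, Finset.mem_image, Finset.mem_univ,
      true_and] at ha
    rcases ha with ((rfl | ⟨j, rfl⟩) | ⟨j, rfl⟩) | ⟨j, rfl⟩ <;> rfl
  have hmapsT : ∀ p ∈ PF, (fun p : List (CArc n r ℓ) => p.getLast?.getD CArc.as) p ∈ inT := by
    intro p hp
    obtain ⟨b, hb, hbt, -⟩ := hlastarc p hp
    simp only [hb, Option.getD_some]
    rcases carc_head_t b hbt with rfl | ⟨j, rfl⟩ | ⟨j, rfl⟩ | ⟨j, rfl⟩ <;>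
      simp [hinTdef]
  have hfeqT : ∀ a ∈ inT,
      PF.filter (fun p => p.getLast?.getD CArc.as = a) = PF.filter (fun p => a ∈ p) := by
    intro a ha
    have hta := hinT_head a ha
    ext p
    simp only [Finset.mem_filter, and_congr_right_iff]
    intro hp
    obtain ⟨b, hb, hbt, hbmem⟩ := hlastarc p hp
    constructor
    · intro hgp
      have hab : a = b := by rw [← hgp, hb]; rfl
      rw [hab]; exact hbmem
    · intro hap
      have h2 := ((hmemPF p).mp hp).getLast?_eq hap hta
      rw [h2]; rfl
  have hfibT : ∑ a ∈ inT, ∑ p ∈ PF.filter (fun p => a ∈ p), x p = ∑ p ∈ PF, x p := by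
    rw [← Finset.sum_fiberwise_of_maps_to hmapsT x]
    exact Finset.sum_congr rfl fun a ha => by rw [hfeqT a ha]
  have hcardT : inT.card = n + ℓ := by
    have hd1 : Disjoint ({CArc.at'} : Finset (CArc n r ℓ)) (Finset.univ.image CArc.at0) := by
      simp [Finset.disjoint_left]
    have hd2 : Disjoint (({CArc.at'} : Finset (CArc n r ℓ)) ∪ Finset.univ.image CArc.at0)
        (Finset.univ.image CArc.at1) := by
      rw [Finset.disjoint_left]
      rintro a ha hb
      simp only [Finset.mem_union, Finset.mem_singleton, Finset.mem_image, Finset.mem_univ,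
        true_and] at ha hb
      obtain ⟨i, rfl⟩ := hb
      rcases ha with h | ⟨i', h⟩ <;> simp at h
    have hd3 : Disjoint (({CArc.at'} : Finset (CArc n r ℓ)) ∪ Finset.univ.image CArc.at0
        ∪ Finset.univ.image CArc.at1) (Finset.univ.image CArc.ast) := by
      rw [Finset.disjoint_left]
      rintro a ha hb
      simp only [Finset.mem_union, Finset.mem_singleton, Finset.mem_image, Finset.mem_univ,
        true_and] at ha hb
      obtain ⟨i, rfl⟩ := hb
      rcases ha with (h | ⟨i', h⟩) | ⟨i', h⟩ <;> simp at h
    rw [hinTdef, Finset.card_union_of_disjoint hd3, Finset.card_union_of_disjoint hd2,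
      Finset.card_union_of_disjoint hd1, Finset.card_singleton,
      Finset.card_image_of_injective _ hinjt0, Finset.card_image_of_injective _ hinjt1,
      Finset.card_image_of_injective _ hinjst, Finset.card_univ, Finset.card_univ,
      Finset.card_univ, Fintype.card_fin, Fintype.card_fin, Fintype.card_fin]
    omega
  have hflow_at : ∑ p ∈ PF.filter (fun p => CArc.at' ∈ p), x p = 1 := by
    have hforceT : ∀ a ∈ inT, ∑ p ∈ PF.filter (fun p => a ∈ p), x p = 1 := by
      intro a ha
      by_contra hne
      have hlt : ∑ p ∈ PF.filter (fun p => a ∈ p), x p < 1 :=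
        lt_of_le_of_ne (hcap a) hne
      have hsum : ∑ b ∈ inT, ∑ p ∈ PF.filter (fun p => b ∈ p), x p
          < ∑ _b ∈ inT, (1 : ℚ) :=
        Finset.sum_lt_sum (fun i _ => hcap i) ⟨a, ha, hlt⟩
      rw [Finset.sum_const, nsmul_eq_mul, mul_one, hcardT, hfibT, hval] at hsum
      push_cast at hsum
      exact lt_irrefl _ hsum
    exact hforceT _ (by simp [hinTdef])
  ---- the scenario S̄
  have hscen : cliqueScenario (cH n r ℓ G) (ℓ + 1) {a : CArc n r ℓ | inSbar n r ℓ a} := by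
    refine ⟨Set.toFinite _, ?_, ?_⟩
    · have hseteq : {a : CArc n r ℓ | inSbar n r ℓ a}
          = ↑(({CArc.as, CArc.at'} : Finset (CArc n r ℓ)) ∪ Finset.univ.image CArc.ast) := by
        ext a
        cases a <;> simp [inSbar]
      rw [hseteq, Set.ncard_coe_finset]
      have h1 : ({CArc.as, CArc.at'} : Finset (CArc n r ℓ)).card ≤ 2 := by
        apply le_trans (Finset.card_insert_le _ _); simp
      have h2 : (Finset.univ.image (CArc.ast : Fin (ℓ - 1) → CArc n r ℓ)).card ≤ ℓ - 1 := by
        apply le_trans Finset.card_image_le; simp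
      have h3 := Finset.card_union_le ({CArc.as, CArc.at'} : Finset (CArc n r ℓ))
        (Finset.univ.image CArc.ast)
      omega
    · intro a ha b hb hne
      unfold cH
      rw [SimpleGraph.fromRel_adj]
      exact ⟨hne, Or.inl (Or.inr (Or.inr ⟨ha, hb⟩))⟩
  have hloss : ∑ p ∈ PF.filter (fun p => ∃ a, inSbar n r ℓ a ∧ a ∈ p), x p ≤ (ℓ : ℚ) := by
    have h := hxloss _ hscen
    rw [MultiDigraph.loss] at h
    have hseteq : {p : List (CArc n r ℓ) | (cD n r ℓ).IsPath CNode.s CNode.t p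
        ∧ ∃ a ∈ {a : CArc n r ℓ | inSbar n r ℓ a}, a ∈ p}
        = ↑(PF.filter (fun p => ∃ a, inSbar n r ℓ a ∧ a ∈ p)) := by
      ext p; simp [hmemPF]
    rwa [hseteq, finsum_mem_coe_finset] at h
  ---- paths through an ast arc are singletons
  have hsingle : ∀ j : Fin (ℓ - 1), [CArc.ast (n := n) (r := r) j] ∈ PF := by
    intro j
    rw [hmemPF]
    refine ⟨by simp, List.isChain_singleton _, by simp [cD], by simp [cD], by simp [cD]⟩
  have hA2mem : ∀ p ∈ PF.filter (fun p => ∃ j, CArc.ast j ∈ p),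
      ∃ j : Fin (ℓ - 1), p = [CArc.ast j] := by
    intro p hp
    rw [Finset.mem_filter] at hp
    obtain ⟨hpPF, j, hj⟩ := hp
    exact ⟨j, ((hmemPF p).mp hpPF).eq_singleton hj rfl rfl⟩
  have hsumA2 : ∑ p ∈ PF.filter (fun p => ∃ j, CArc.ast j ∈ p), x p = (ℓ : ℚ) - 1 := by
    have hA2eq : PF.filter (fun p => ∃ j, CArc.ast j ∈ p)
        = Finset.univ.image (fun j : Fin (ℓ - 1) => [CArc.ast (n := n) (r := r) j]) := by
      ext p
      simp only [Finset.mem_image, Finset.mem_univ, true_and]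
      constructor
      · intro hp
        obtain ⟨j, hj⟩ := hA2mem p hp
        exact ⟨j, hj.symm⟩
      · rintro ⟨j, rfl⟩
        rw [Finset.mem_filter]
        exact ⟨hsingle j, j, List.mem_singleton_self _⟩
    have hvalast : ∀ j : Fin (ℓ - 1), x [CArc.ast (n := n) (r := r) j] = 1 := by
      intro j
      have h1 : PF.filter (fun p => CArc.ast j ∈ p) = {[CArc.ast j]} := by
        ext p
        simp only [Finset.mem_filter, Finset.mem_singleton]
        constructor
        · rintro ⟨hpPF, hmem⟩
          exact ((hmemPF p).mp hpPF).eq_singleton hmem rfl rfl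
        · rintro rfl
          exact ⟨hsingle j, List.mem_singleton_self _⟩
      have h2 := hflow_ast j
      rwa [h1, Finset.sum_singleton] at h2
    rw [hA2eq, Finset.sum_image (fun a _ b _ h => by simpa using h)]
    rw [Finset.sum_congr rfl (fun j _ => hvalast j), Finset.sum_const, Finset.card_univ,
      Fintype.card_fin, nsmul_eq_mul, mul_one, Nat.cast_sub hℓ, Nat.cast_one]
  ---- combine: the three disjoint families inside the loss
  have hsub : (PF.filter (fun p => CArc.as ∈ p) ∪ PF.filter (fun p => ∃ j, CArc.ast j ∈ p))
      ∪ PF.filter (fun p => CArc.at' ∈ p ∧ CArc.as ∉ p)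
      ⊆ PF.filter (fun p => ∃ a, inSbar n r ℓ a ∧ a ∈ p) := by
    intro p hp
    simp only [Finset.mem_union, Finset.mem_filter] at hp
    rw [Finset.mem_filter]
    rcases hp with (⟨h1, h2⟩ | ⟨h1, j, h2⟩) | ⟨h1, h2, -⟩
    · exact ⟨h1, CArc.as, trivial, h2⟩
    · exact ⟨h1, CArc.ast j, trivial, h2⟩
    · exact ⟨h1, CArc.at', trivial, h2⟩
  have hd12 : Disjoint (PF.filter (fun p => CArc.as ∈ p))
      (PF.filter (fun p => ∃ j, CArc.ast j ∈ p)) := by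
    rw [Finset.disjoint_left]
    intro p hp1 hp2
    obtain ⟨j, rfl⟩ := hA2mem p hp2
    rw [Finset.mem_filter] at hp1
    simpa using hp1.2
  have hd13 : Disjoint (PF.filter (fun p => CArc.as ∈ p))
      (PF.filter (fun p => CArc.at' ∈ p ∧ CArc.as ∉ p)) := by
    rw [Finset.disjoint_left]
    intro p hp1 hp3
    rw [Finset.mem_filter] at hp1 hp3
    exact hp3.2.2 hp1.2
  have hd23 : Disjoint (PF.filter (fun p => ∃ j, CArc.ast j ∈ p))
      (PF.filter (fun p => CArc.at' ∈ p ∧ CArc.as ∉ p)) := by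
    rw [Finset.disjoint_left]
    intro p hp2 hp3
    obtain ⟨j, rfl⟩ := hA2mem p hp2
    rw [Finset.mem_filter] at hp3
    simpa using hp3.2.1
  have hA3zero : ∑ p ∈ PF.filter (fun p => CArc.at' ∈ p ∧ CArc.as ∉ p), x p = 0 := by
    have hle := Finset.sum_le_sum_of_subset_of_nonneg hsub (fun p _ _ => hx0 p)
    rw [Finset.sum_union (Finset.disjoint_union_left.mpr ⟨hd13, hd23⟩),
      Finset.sum_union hd12, hflow_as, hsumA2] at hle
    have h2 := le_trans hle hloss
    have h3 : (0 : ℚ) ≤ ∑ p ∈ PF.filter (fun p => CArc.at' ∈ p ∧ CArc.as ∉ p), x p :=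
      Finset.sum_nonneg fun p _ => hx0 p
    linarith
  have hBsum : ∑ p ∈ PF.filter (fun p => CArc.at' ∈ p ∧ CArc.as ∈ p), x p = 1 := by
    have hsplit := Finset.sum_filter_add_sum_filter_not
      (PF.filter (fun p => CArc.at' ∈ p)) (fun p => CArc.as ∈ p) x
    rw [Finset.filter_filter, Finset.filter_filter, hflow_at] at hsplit
    have hA3' : ∑ p ∈ PF.filter (fun p => CArc.at' ∈ p ∧ ¬CArc.as ∈ p), x p = 0 := hA3zero
    linarith
  ---- extract the path
  have hBne : ∑ p ∈ PF.filter (fun p => CArc.at' ∈ p ∧ CArc.as ∈ p), x p ≠ 0 := by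
    rw [hBsum]; norm_num
  obtain ⟨P', hP'mem, hP'ne⟩ := Finset.exists_ne_zero_of_sum_ne_zero hBne
  rw [Finset.mem_filter] at hP'mem
  obtain ⟨hP'PF, hP'at, hP'as⟩ := hP'mem
  have hP'path := (hmemPF P').mp hP'PF
  have hub : x P' ≤ 1 := by
    have h1 : x P' ≤ ∑ p ∈ PF.filter (fun p => CArc.as ∈ p), x p :=
      Finset.single_le_sum (fun p _ => hx0 p)
        (by rw [Finset.mem_filter]; exact ⟨hP'PF, hP'as⟩)
    rwa [hflow_as] at h1
  have hlb : 1 ≤ x P' := by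
    obtain ⟨z, hz⟩ := hxint P'
    have h0 : (0 : ℚ) ≤ (z : ℚ) := by rw [← hz]; exact hx0 P'
    have h1 : (z : ℚ) ≠ 0 := by rw [← hz]; exact hP'ne
    have h2 : (1 : ℤ) ≤ z := by
      have hz0 : (0 : ℤ) ≤ z := by exact_mod_cast h0
      have hzne : z ≠ 0 := by exact_mod_cast h1
      omega
    rw [hz]
    exact_mod_cast h2
  exact ⟨P', hP'path, le_antisymm hub hlb, hP'as, hP'at⟩
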